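/- Rieger's theorem: For every cyclically ordered group (G,R) there exist a totally ordered group (F,\leq) and a positive element z \in F which is central and cofinal, such that (G,R) is isomorphic as a cyclically ordered group to the wound-round group F/\langle z \rangle. -/

import Mathlib

/-- A cyclically ordered group: a ternary relation satisfying R1-R5. -/
def IsCyclicOrder {G : Type*} [Group G] (R : G → G → G → Prop) : Prop :=
  (∀ x y z : G, R x y z → x ≠ y ∧ y ≠ z ∧ z ≠ x) ∧
  (∀ x y z : G, x ≠ y → y ≠ z → z ≠ x → R x y z ∨ R x z y) ∧
  (∀ x y z : G, R x y z → R y z x) ∧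
  (∀ x y z u : G, R x y z → R y u z → R x u z) ∧
  (∀ x y z u v : G, R x y z → R (u * x * v) (u * y * v) (u * z * v))

/-- Witness for Rieger's theorem: a totally ordered group `F` (bi-invariant
linear order), a positive central cofinal element `z`, and a surjective group
homomorphism `φ : F → G` with kernel `⟨z⟩` such that the cyclic order `R` on
`G ≅ F/⟨z⟩` is the winding cyclic order. -/
structure RiegerWitness (G : Type u) [Group G] (R : G → G → G → Prop) :
    Type (u + 1) where
  F : Type u
  [grp : Group F]
  [lin : LinearOrder F]
  mul_lt_mul : ∀ a b c d : F, a < b → c * a * d < c * b * d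
  z : F
  one_lt_z : 1 < z
  central : ∀ f : F, z * f = f * z
  cofinal : ∀ f : F, ∃ n : ℤ, f ≤ z ^ n
  φ : F →* G
  surj : Function.Surjective φ
  ker : ∀ f : F, φ f = 1 ↔ ∃ n : ℤ, f = z ^ n
  winding : ∀ a b c : G, R a b c ↔
    ∃ a' b' c' : F, φ a' = a ∧ φ b' = b ∧ φ c' = c ∧
      1 ≤ a' ∧ a' < z ∧ 1 ≤ b' ∧ b' < z ∧ 1 ≤ c' ∧ c' < z ∧
      ((a' < b' ∧ b' < c') ∨ (b' < c' ∧ c' < a') ∨ (c' < a' ∧ a' < b'))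

namespace RiegerAux

universe v
variable {G : Type v} [Group G]

section Defs
variable (R : G → G → G → Prop)

/-- The linear order on `G` obtained by cutting the circle at `1`. -/
def rlt (a b : G) : Prop := (a = 1 ∧ b ≠ 1) ∨ R 1 a b

open Classical in
/-- The wrap-around cocycle. -/
noncomputable def rc (g h : G) : ℤ := if rlt R (g * h) g then 1 else 0

/-- The unwound group `ℤ ×_c G`. -/
structure Wd (G : Type v) where
  n : ℤ
  g : G

def ltW (x y : Wd G) : Prop := x.n < y.n ∨ (x.n = y.n ∧ rlt R x.g y.g)

def leW (x y : Wd G) : Prop := ltW R x y ∨ x = y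

end Defs

lemma Wd.ext' {x y : Wd G} (h1 : x.n = y.n) (h2 : x.g = y.g) : x = y := by
  cases x; cases y; cases h1; cases h2; rfl

variable {R : G → G → G → Prop} (hR : IsCyclicOrder R)
include hR

lemma hne {x y z : G} (h : R x y z) : x ≠ y ∧ y ≠ z ∧ z ≠ x := hR.1 x y z h
lemma htot {x y z : G} (h1 : x ≠ y) (h2 : y ≠ z) (h3 : z ≠ x) :
    R x y z ∨ R x z y := hR.2.1 x y z h1 h2 h3
lemma rot {x y z : G} (h : R x y z) : R y z x := hR.2.2.1 x y z h
lemma r4 {x y z u : G} (h1 : R x y z) (h2 : R y u z) : R x u z :=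
  hR.2.2.2.1 x y z u h1 h2
lemma binv {x y z : G} (u w : G) (h : R x y z) :
    R (u * x * w) (u * y * w) (u * z * w) := hR.2.2.2.2 x y z u w h
lemma linv {x y z : G} (u : G) (h : R x y z) : R (u * x) (u * y) (u * z) := by
  simpa using binv hR u 1 h
lemma rinv {x y z : G} (w : G) (h : R x y z) : R (x * w) (y * w) (z * w) := by
  simpa using binv hR 1 w h

lemma asym {x y z : G} (h1 : R x y z) (h2 : R x z y) : False := by
  have h3 : R y x z := rot hR (rot hR h2)
  exact (hne hR (r4 hR h1 h3)).1 rfl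

lemma transR {a b c d : G} (h1 : R a b c) (h2 : R a c d) : R a b d :=
  rot hR (rot hR (r4 hR (rot hR h1) (rot hR h2)))

lemma rlt_irrefl (a : G) : ¬ rlt R a a := by
  rintro (⟨h1, h2⟩ | h)
  · exact h2 h1
  · exact (hne hR h).2.1 rfl

lemma not_rlt_one (a : G) : ¬ rlt R a 1 := by
  rintro (⟨_, h⟩ | h)
  · exact h rfl
  · exact (hne hR h).2.2 rfl

lemma rlt_one_iff {a : G} : rlt R 1 a ↔ a ≠ 1 := by
  constructor
  · rintro (⟨_, h⟩ | h)
    · exact h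
    · exact absurd rfl (hne hR h).1
  · exact fun h => Or.inl ⟨rfl, h⟩

lemma rlt_total {a b : G} (h : a ≠ b) : rlt R a b ∨ rlt R b a := by
  by_cases ha : a = 1
  · exact Or.inl (Or.inl ⟨ha, fun hb => h (by rw [ha, hb])⟩)
  · by_cases hb : b = 1
    · exact Or.inr (Or.inl ⟨hb, ha⟩)
    · rcases htot hR (Ne.symm ha) h hb with h' | h'
      · exact Or.inl (Or.inr h')
      · exact Or.inr (Or.inr h')

lemma rlt_asymm {a b : G} (h1 : rlt R a b) (h2 : rlt R b a) : False := by
  rcases h1 with ⟨ha, hb⟩ | h1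
  · rcases h2 with ⟨hb', _⟩ | h2
    · exact hb hb'
    · exact (hne hR h2).2.2 ha
  · rcases h2 with ⟨hb, _⟩ | h2
    · exact (hne hR h1).2.2 hb
    · exact asym hR h1 h2

lemma rlt_trans {a b c : G} (h1 : rlt R a b) (h2 : rlt R b c) : rlt R a c := by
  rcases h1 with ⟨ha, hb⟩ | h1
  · rcases h2 with ⟨hb', _⟩ | h2
    · exact absurd hb' hb
    · exact Or.inl ⟨ha, (hne hR h2).2.2⟩
  · rcases h2 with ⟨hb, _⟩ | h2
    · exact absurd hb (hne hR h1).2.2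
    · exact Or.inr (transR hR h1 h2)

lemma cyc3 {a b c : G} (h1 : rlt R a b) (h2 : rlt R b c) : R a b c := by
  rcases h1 with ⟨ha, hb⟩ | h1
  · rcases h2 with ⟨hb', _⟩ | h2
    · exact absurd hb' hb
    · rw [ha]; exact h2
  · rcases h2 with ⟨hb, _⟩ | h2
    · exact absurd hb (hne hR h1).2.2
    · have hac : R 1 a c := transR hR h1 h2
      have hab : a ≠ b := (hne hR h1).2.1
      have hbc : b ≠ c := (hne hR h2).2.1
      have hca : c ≠ a := Ne.symm (hne hR hac).2.1
      rcases htot hR hab hbc hca with h | h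
      · exact h
      · exfalso
        have hbac : R b a c := rot hR (rot hR h)
        have hbc1 : R b c 1 := rot hR h2
        have hba1 : R b a 1 := transR hR hbac hbc1
        exact asym hR hba1 (rot hR (rot hR h1))

lemma cyc_iff {a b c : G} (hab : a ≠ b) (hbc : b ≠ c) (hca : c ≠ a) :
    R a b c ↔ (rlt R a b ∧ rlt R b c) ∨ (rlt R b c ∧ rlt R c a) ∨
      (rlt R c a ∧ rlt R a b) := by
  constructor
  · intro h
    rcases rlt_total hR hab with h1 | h1
    · rcases rlt_total hR hbc with h2 | h2
      · exact Or.inl ⟨h1, h2⟩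
      · rcases rlt_total hR hca with h3 | h3
        · exact Or.inr (Or.inr ⟨h3, h1⟩)
        · exact absurd h (fun h => asym hR h (cyc3 hR h3 h2))
    · rcases rlt_total hR hbc with h2 | h2
      · rcases rlt_total hR hca with h3 | h3
        · exact Or.inr (Or.inl ⟨h2, h3⟩)
        · exact absurd h (fun h => asym hR h (rot hR (cyc3 hR h1 h3)))
      · rcases rlt_total hR hca with h3 | h3
        · exact absurd h (fun h => asym hR h (rot hR (rot hR (cyc3 hR h2 h1))))
        · exact absurd (rlt_trans hR h1 h3) (fun hx => rlt_asymm hR hx h2)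
  · rintro (⟨h1, h2⟩ | ⟨h1, h2⟩ | ⟨h1, h2⟩)
    · exact cyc3 hR h1 h2
    · exact rot hR (rot hR (cyc3 hR h1 h2))
    · exact rot hR (cyc3 hR h1 h2)

lemma wind1 {g v : G} (H : R 1 v (g * v)) (G' : R 1 (g * v) g) : False := by
  have K3 : R 1 v g := transR hR H G'
  have J1 : R 1 g v⁻¹ := rot hR (by simpa using rinv hR v⁻¹ H)
  have K2 : R 1 g⁻¹ v := rot hR (rot hR (by simpa using linv hR g⁻¹ G'))
  have J6 : R g⁻¹ (g⁻¹ * v) v := by simpa using linv hR g⁻¹ H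
  have M : R 1 (g⁻¹ * v) v := r4 hR K2 J6
  have N : R 1 v⁻¹ g⁻¹ := rot hR (rot hR (by simpa using rinv hR v⁻¹ M))
  have P1 : R 1 g g⁻¹ := transR hR J1 N
  have P2 : R 1 g v := transR hR P1 K2
  exact asym hR K3 P2

lemma wind2 {g v : G} (H1 : R 1 g (g * v)) (H2 : R 1 (g * v) v) : False := by
  have K3 : R 1 g v := transR hR H1 H2
  have hv : R 1 v g⁻¹ := rot hR (by simpa using linv hR g⁻¹ H1)
  have hg : R 1 v⁻¹ g := rot hR (rot hR (by simpa using rinv hR v⁻¹ H2))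
  have J : R v⁻¹ (g * v⁻¹) g := by simpa using rinv hR v⁻¹ H1
  have M : R 1 (g * v⁻¹) g := r4 hR hg J
  have N : R 1 g⁻¹ v⁻¹ := rot hR (rot hR (by simpa using linv hR g⁻¹ M))
  have P1 : R 1 v v⁻¹ := transR hR hv N
  have P2 : R 1 v g := transR hR P1 hg
  exact asym hR K3 P2

lemma wrap_iff (g v : G) : rlt R (g * v) g ↔ rlt R (g * v) v := by
  constructor
  · rintro (⟨ha, hg⟩ | h)
    · refine Or.inl ⟨ha, fun hv => hg ?_⟩
      rw [hv, mul_one] at ha; exact ha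
    · right
      have h1 : (1 : G) ≠ g * v := (hne hR h).1
      have h2 : g * v ≠ g := (hne hR h).2.1
      have hg1 : g ≠ 1 := (hne hR h).2.2
      have hv1 : v ≠ 1 := fun e => h2 (by rw [e, mul_one])
      have hgvv : g * v ≠ v := fun e =>
        hg1 (mul_right_cancel (e.trans (one_mul v).symm))
      rcases htot hR h1 hgvv hv1 with h' | h'
      · exact h'
      · exact (wind1 hR h' h).elim
  · rintro (⟨ha, hv⟩ | h)
    · refine Or.inl ⟨ha, fun hg => hv ?_⟩
      rw [hg, one_mul] at ha; exact ha
    · right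
      have h1 : (1 : G) ≠ g * v := (hne hR h).1
      have hgv_v : g * v ≠ v := (hne hR h).2.1
      have hv1 : v ≠ 1 := (hne hR h).2.2
      have hg1 : g ≠ 1 := fun e => hgv_v (by rw [e, one_mul])
      have hgvg : g * v ≠ g := fun e =>
        hv1 (mul_left_cancel (e.trans (mul_one g).symm))
      rcases htot hR h1 hgvg hg1 with h' | h'
      · exact h'
      · exact (wind2 hR h' h).elim

lemma rlt_translate_left {x y : G} (u : G) (h : rlt R x y) :
    (u * x = u ∧ u * y ≠ u) ∨ R u (u * x) (u * y) := by
  rcases h with ⟨hx, hy⟩ | h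
  · exact Or.inl ⟨by rw [hx, mul_one],
      fun e => hy (mul_left_cancel (e.trans (mul_one u).symm))⟩
  · right; simpa using linv hR u h

lemma rlt_translate_right {x y : G} (w : G) (h : rlt R x y) :
    (x * w = w ∧ y * w ≠ w) ∨ R w (x * w) (y * w) := by
  rcases h with ⟨hx, hy⟩ | h
  · exact Or.inl ⟨by rw [hx, one_mul],
      fun e => hy (mul_right_cancel (e.trans (one_mul w).symm))⟩
  · right; simpa using rinv hR w h

lemma arcMono {u a b : G} (h : (a = u ∧ b ≠ u) ∨ R u a b) :
    (¬ rlt R a u ∧ rlt R b u) ∨ ((rlt R a u ↔ rlt R b u) ∧ rlt R a b) := by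
  by_cases hau : rlt R a u
  · by_cases hbu : rlt R b u
    · refine Or.inr ⟨iff_of_true hau hbu, ?_⟩
      rcases h with ⟨he, _⟩ | h
      · exact absurd hau (by rw [he]; exact rlt_irrefl hR u)
      · have hd := hne hR h
        rcases (cyc_iff hR hd.1 hd.2.1 hd.2.2).1 h with ⟨_, h1⟩ | ⟨h1, _⟩ | ⟨_, h1⟩
        · exact h1
        · exact h1
        · exact (rlt_asymm hR h1 hau).elim
    · exfalso
      rcases h with ⟨he, _⟩ | h
      · rw [he] at hau; exact rlt_irrefl hR u hau
      · have hd := hne hR h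
        rcases (cyc_iff hR hd.1 hd.2.1 hd.2.2).1 h with ⟨h1, _⟩ | ⟨_, h1⟩ | ⟨h1, _⟩
        · exact rlt_asymm hR h1 hau
        · exact hbu h1
        · exact hbu h1
  · by_cases hbu : rlt R b u
    · exact Or.inl ⟨hau, hbu⟩
    · refine Or.inr ⟨iff_of_false hau hbu, ?_⟩
      rcases h with ⟨he, hb⟩ | h
      · rcases rlt_total hR (Ne.symm hb) with h' | h'
        · rw [he]; exact h'
        · exact absurd h' hbu
      · have hd := hne hR h
        rcases (cyc_iff hR hd.1 hd.2.1 hd.2.2).1 h with ⟨_, h1⟩ | ⟨h1, _⟩ | ⟨h1, _⟩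
        · exact h1
        · exact h1
        · exact absurd h1 hbu

omit hR in
lemma rc_nonneg (g h : G) : 0 ≤ rc R g h := by
  unfold rc; split <;> omega

omit hR in
lemma rc_le_one (g h : G) : rc R g h ≤ 1 := by
  unfold rc; split <;> omega

omit hR in
lemma rc_eq_one_iff {g h : G} : rc R g h = 1 ↔ rlt R (g * h) g := by
  unfold rc; split_ifs with h' <;> simp [h']

omit hR in
lemma rc_eq_zero_iff {g h : G} : rc R g h = 0 ↔ ¬ rlt R (g * h) g := by
  unfold rc; split_ifs with h' <;> simp [h']

lemma rc_eq_one_iff' {g w : G} : rc R g w = 1 ↔ rlt R (g * w) w :=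
  (rc_eq_one_iff).trans (wrap_iff hR g w)

lemma rc_eq_zero_iff' {g w : G} : rc R g w = 0 ↔ ¬ rlt R (g * w) w := by
  rw [rc_eq_zero_iff, wrap_iff hR g w]

lemma monoL (u : G) {g h : G} (hgh : rlt R g h) :
    (rc R u g = 0 ∧ rc R u h = 1) ∨
      (rc R u g = rc R u h ∧ rlt R (u * g) (u * h)) := by
  rcases arcMono hR (rlt_translate_left hR u hgh) with ⟨h1, h2⟩ | ⟨h1, h2⟩
  · exact Or.inl ⟨rc_eq_zero_iff.2 h1, rc_eq_one_iff.2 h2⟩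
  · refine Or.inr ⟨?_, h2⟩
    by_cases hw : rlt R (u * g) u
    · rw [rc_eq_one_iff.2 hw, rc_eq_one_iff.2 (h1.1 hw)]
    · rw [rc_eq_zero_iff.2 hw, rc_eq_zero_iff.2 (fun hx => hw (h1.2 hx))]

lemma monoR (w : G) {g h : G} (hgh : rlt R g h) :
    (rc R g w = 0 ∧ rc R h w = 1) ∨
      (rc R g w = rc R h w ∧ rlt R (g * w) (h * w)) := by
  rcases arcMono hR (rlt_translate_right hR w hgh) with ⟨h1, h2⟩ | ⟨h1, h2⟩
  · exact Or.inl ⟨(rc_eq_zero_iff' hR).2 h1, (rc_eq_one_iff' hR).2 h2⟩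
  · refine Or.inr ⟨?_, h2⟩
    by_cases hw' : rlt R (g * w) w
    · rw [(rc_eq_one_iff' hR).2 hw', (rc_eq_one_iff' hR).2 (h1.1 hw')]
    · rw [(rc_eq_zero_iff' hR).2 hw',
        (rc_eq_zero_iff' hR).2 (fun hx => hw' (h1.2 hx))]

lemma tie {u x y : G} (h1 : rlt R x u) (h2 : ¬ rlt R y u) : rlt R x y := by
  by_cases he : y = u
  · rw [he]; exact h1
  · rcases rlt_total hR he with h' | h'
    · exact absurd h' h2
    · exact rlt_trans hR h1 h'

lemma rc_one_left (g : G) : rc R 1 g = 0 :=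
  rc_eq_zero_iff.2 (by rw [one_mul]; exact not_rlt_one hR g)

lemma rc_one_right (g : G) : rc R g 1 = 0 :=
  rc_eq_zero_iff.2 (by rw [mul_one]; exact rlt_irrefl hR g)

lemma rc_inv (g : G) : rc R g⁻¹ g = rc R g g⁻¹ := by
  by_cases hg : g = 1
  · rw [hg, inv_one]
  · have h1 : rc R g g⁻¹ = 1 :=
      rc_eq_one_iff.2 (by rw [mul_inv_cancel]; exact Or.inl ⟨rfl, hg⟩)
    have h2 : rc R g⁻¹ g = 1 :=
      rc_eq_one_iff.2 (by rw [inv_mul_cancel]; exact Or.inl ⟨rfl, inv_ne_one.2 hg⟩)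
    rw [h1, h2]

lemma cocycle (g h k : G) :
    rc R g h + rc R (g * h) k = rc R h k + rc R g (h * k) := by
  by_cases hh : h = 1
  · subst hh
    have e1 : rc R g 1 = 0 := rc_one_right hR g
    have e2 : rc R (1 : G) k = 0 := rc_one_left hR k
    rw [mul_one, one_mul]
    omega
  · by_cases hk : k = 1
    · subst hk
      have e1 := rc_one_right hR (g * h)
      have e2 := rc_one_right hR h
      rw [mul_one]
      omega
    · by_cases hhk : h * k = 1
      · have e1 : rc R h k = 1 :=
          rc_eq_one_iff.2 (by rw [hhk]; exact Or.inl ⟨rfl, hh⟩)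
        have e2 : rc R g (h * k) = 0 :=
          rc_eq_zero_iff.2 (by rw [hhk, mul_one]; exact rlt_irrefl hR g)
        have hQ : g * h ≠ g := fun e => hh (mul_left_cancel (e.trans (mul_one g).symm))
        have e3 : g * h * k = g := by rw [mul_assoc, hhk, mul_one]
        rcases rlt_total hR hQ with hc | hc
        · have f1 : rc R g h = 1 := rc_eq_one_iff.2 hc
          have f2 : rc R (g * h) k = 0 :=
            rc_eq_zero_iff.2 (by rw [e3]; exact fun hx => rlt_asymm hR hx hc)
          omega
        · have f1 : rc R g h = 0 :=
            rc_eq_zero_iff.2 (fun hx => rlt_asymm hR hx hc)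
          have f2 : rc R (g * h) k = 1 := rc_eq_one_iff.2 (by rw [e3]; exact hc)
          omega
      · -- general case: h ≠ 1, k ≠ 1, h*k ≠ 1
        have hQP : g * h ≠ g := fun e => hh (mul_left_cancel (e.trans (mul_one g).symm))
        have hSQ : g * h * k ≠ g * h := fun e =>
          hk (mul_left_cancel (e.trans (mul_one (g * h)).symm))
        have hSP : g * (h * k) ≠ g := fun e =>
          hhk (mul_left_cancel (e.trans (mul_one g).symm))
        have hSPg : g * h * k ≠ g := fun e => hSP ((mul_assoc g h k).symm.trans e)
        have hCiff : rlt R (h * k) h ↔ R g (g * h * k) (g * h) := by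
          constructor
          · intro hx
            rcases rlt_translate_left hR g hx with ⟨he, _⟩ | hx'
            · exact absurd he hSP
            · rw [← mul_assoc] at hx'; exact hx'
          · intro hx
            rw [mul_assoc] at hx
            exact Or.inr (by simpa using linv hR g⁻¹ hx)
        have hCd := hCiff.trans
          (cyc_iff hR (fun e => hSP ((mul_assoc g h k).symm.trans e.symm)) hSQ hQP)
        rcases rlt_total hR hQP with hA | hA <;>
          rcases rlt_total hR hSQ with hB | hB <;>
          rcases rlt_total hR hSPg with hD | hD
        · -- Q<P, S<Q, S<P
          have eA : rc R g h = 1 := rc_eq_one_iff.2 hA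
          have eB : rc R (g * h) k = 1 := rc_eq_one_iff.2 hB
          have eD : rc R g (h * k) = 1 :=
            rc_eq_one_iff.2 (by rw [← mul_assoc]; exact hD)
          have eC : rc R h k = 1 :=
            rc_eq_one_iff.2 (hCd.2 (Or.inr (Or.inl ⟨hB, hA⟩)))
          omega
        · exact ((rlt_asymm hR (rlt_trans hR hB hA) hD).elim)
        · -- Q<P, Q<S, S<P
          have eA : rc R g h = 1 := rc_eq_one_iff.2 hA
          have eB : rc R (g * h) k = 0 :=
            rc_eq_zero_iff.2 (fun h' => rlt_asymm hR h' hB)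
          have eD : rc R g (h * k) = 1 :=
            rc_eq_one_iff.2 (by rw [← mul_assoc]; exact hD)
          have eC : rc R h k = 0 := rc_eq_zero_iff.2 (fun h' => by
            rcases hCd.1 h' with ⟨u1, u2⟩ | ⟨u1, u2⟩ | ⟨u1, u2⟩
            · exact rlt_asymm hR u2 hB
            · exact rlt_asymm hR u1 hB
            · exact rlt_asymm hR u2 hD)
          omega
        · -- Q<P, Q<S, P<S
          have eA : rc R g h = 1 := rc_eq_one_iff.2 hA
          have eB : rc R (g * h) k = 0 :=
            rc_eq_zero_iff.2 (fun h' => rlt_asymm hR h' hB)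
          have eD : rc R g (h * k) = 0 := rc_eq_zero_iff.2 (fun h' => by
            rw [← mul_assoc] at h'; exact rlt_asymm hR h' hD)
          have eC : rc R h k = 1 :=
            rc_eq_one_iff.2 (hCd.2 (Or.inr (Or.inr ⟨hA, hD⟩)))
          omega
        · -- P<Q, S<Q, S<P
          have eA : rc R g h = 0 :=
            rc_eq_zero_iff.2 (fun h' => rlt_asymm hR h' hA)
          have eB : rc R (g * h) k = 1 := rc_eq_one_iff.2 hB
          have eD : rc R g (h * k) = 1 :=
            rc_eq_one_iff.2 (by rw [← mul_assoc]; exact hD)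
          have eC : rc R h k = 0 := rc_eq_zero_iff.2 (fun h' => by
            rcases hCd.1 h' with ⟨u1, u2⟩ | ⟨u1, u2⟩ | ⟨u1, u2⟩
            · exact rlt_asymm hR u1 hD
            · exact rlt_asymm hR u2 hA
            · exact rlt_asymm hR u1 hA)
          omega
        · -- P<Q, S<Q, P<S
          have eA : rc R g h = 0 :=
            rc_eq_zero_iff.2 (fun h' => rlt_asymm hR h' hA)
          have eB : rc R (g * h) k = 1 := rc_eq_one_iff.2 hB
          have eD : rc R g (h * k) = 0 := rc_eq_zero_iff.2 (fun h' => by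
            rw [← mul_assoc] at h'; exact rlt_asymm hR h' hD)
          have eC : rc R h k = 1 :=
            rc_eq_one_iff.2 (hCd.2 (Or.inl ⟨hD, hB⟩))
          omega
        · exact ((rlt_asymm hR (rlt_trans hR hA hB) hD).elim)
        · -- P<Q, Q<S, P<S
          have eA : rc R g h = 0 :=
            rc_eq_zero_iff.2 (fun h' => rlt_asymm hR h' hA)
          have eB : rc R (g * h) k = 0 :=
            rc_eq_zero_iff.2 (fun h' => rlt_asymm hR h' hB)
          have eD : rc R g (h * k) = 0 := rc_eq_zero_iff.2 (fun h' => by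
            rw [← mul_assoc] at h'; exact rlt_asymm hR h' hD)
          have eC : rc R h k = 0 := rc_eq_zero_iff.2 (fun h' => by
            rcases hCd.1 h' with ⟨u1, u2⟩ | ⟨u1, u2⟩ | ⟨u1, u2⟩
            · exact rlt_asymm hR u2 hB
            · exact rlt_asymm hR u1 hB
            · exact rlt_asymm hR u1 hA)
          omega

/-- The group structure on the unwinding. -/
noncomputable def wdGroup : Group (Wd G) where
  mul x y := ⟨x.n + y.n + rc R x.g y.g, x.g * y.g⟩
  one := ⟨0, 1⟩
  inv x := ⟨-x.n - rc R x.g x.g⁻¹, x.g⁻¹⟩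
  mul_assoc x y z := by
    apply Wd.ext'
    · show x.n + y.n + rc R x.g y.g + z.n + rc R (x.g * y.g) z.g =
        x.n + (y.n + z.n + rc R y.g z.g) + rc R x.g (y.g * z.g)
      have := cocycle hR x.g y.g z.g
      omega
    · exact mul_assoc x.g y.g z.g
  one_mul x := by
    apply Wd.ext'
    · show 0 + x.n + rc R 1 x.g = x.n
      rw [rc_one_left hR]; omega
    · exact one_mul x.g
  mul_one x := by
    apply Wd.ext'
    · show x.n + 0 + rc R x.g 1 = x.n
      rw [rc_one_right hR]; omega
    · exact mul_one x.g
  inv_mul_cancel x := by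
    apply Wd.ext'
    · show -x.n - rc R x.g x.g⁻¹ + x.n + rc R x.g⁻¹ x.g = 0
      rw [rc_inv hR]; omega
    · exact inv_mul_cancel x.g

lemma ltW_trans {x y z : Wd G} (h1 : ltW R x y) (h2 : ltW R y z) : ltW R x z := by
  rcases h1 with h1 | ⟨e1, h1⟩ <;> rcases h2 with h2 | ⟨e2, h2⟩
  · left; omega
  · left; omega
  · left; omega
  · right; exact ⟨e1.trans e2, rlt_trans hR h1 h2⟩

lemma ltW_irrefl (x : Wd G) : ¬ ltW R x x := by
  rintro (h | ⟨_, h⟩)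
  · omega
  · exact rlt_irrefl hR _ h

lemma ltW_total (x y : Wd G) : ltW R x y ∨ x = y ∨ ltW R y x := by
  rcases lt_trichotomy x.n y.n with h | h | h
  · exact Or.inl (Or.inl h)
  · by_cases hg : x.g = y.g
    · exact Or.inr (Or.inl (Wd.ext' h hg))
    · rcases rlt_total hR hg with h' | h'
      · exact Or.inl (Or.inr ⟨h, h'⟩)
      · exact Or.inr (Or.inr (Or.inr ⟨h.symm, h'⟩))
  · exact Or.inr (Or.inr (Or.inl h))

/-- The linear order on the unwinding. -/
noncomputable def wdLinearOrder : LinearOrder (Wd G) where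
  le := leW R
  lt := ltW R
  le_refl x := Or.inr rfl
  le_trans x y z h1 h2 := by
    rcases h1 with h1 | rfl
    · rcases h2 with h2 | rfl
      · exact Or.inl (ltW_trans hR h1 h2)
      · exact Or.inl h1
    · exact h2
  le_antisymm x y h1 h2 := by
    rcases h1 with h1 | h1
    · rcases h2 with h2 | h2
      · exact ((ltW_irrefl hR x) (ltW_trans hR h1 h2)).elim
      · exact h2.symm
    · exact h1
  le_total x y := by
    rcases ltW_total hR x y with h | h | h
    · exact Or.inl (Or.inl h)
    · exact Or.inl (Or.inr h)
    · exact Or.inr (Or.inl h)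
  lt_iff_le_not_ge x y := by
    constructor
    · intro h
      refine ⟨Or.inl h, ?_⟩
      rintro (h' | rfl)
      · exact ltW_irrefl hR _ (ltW_trans hR h h')
      · exact ltW_irrefl hR _ h
    · rintro ⟨h1 | rfl, h2⟩
      · exact h1
      · exact absurd (Or.inr rfl) h2
  toDecidableLE := fun _ _ => Classical.dec _

lemma mono_left (c x y : Wd G) (h : ltW R x y) :
    ltW R ⟨c.n + x.n + rc R c.g x.g, c.g * x.g⟩
      ⟨c.n + y.n + rc R c.g y.g, c.g * y.g⟩ := by
  rcases h with h | ⟨e, h⟩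
  · have b1 := rc_le_one (R := R) c.g x.g
    have b2 := rc_nonneg (R := R) c.g y.g
    have b3 := rc_nonneg (R := R) c.g x.g
    have b4 := rc_le_one (R := R) c.g y.g
    by_cases hlt : c.n + x.n + rc R c.g x.g < c.n + y.n + rc R c.g y.g
    · exact Or.inl hlt
    · have h1 : rc R c.g x.g = 1 := by omega
      have h2 : rc R c.g y.g = 0 := by omega
      refine Or.inr ⟨?_, ?_⟩
      · show c.n + x.n + rc R c.g x.g = c.n + y.n + rc R c.g y.g
        omega
      · exact tie hR (rc_eq_one_iff.1 h1) (rc_eq_zero_iff.1 h2)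
  · rcases monoL hR c.g h with ⟨h1, h2⟩ | ⟨h1, h2⟩
    · refine Or.inl ?_
      show c.n + x.n + rc R c.g x.g < c.n + y.n + rc R c.g y.g
      omega
    · refine Or.inr ⟨?_, h2⟩
      show c.n + x.n + rc R c.g x.g = c.n + y.n + rc R c.g y.g
      omega

lemma mono_right (d x y : Wd G) (h : ltW R x y) :
    ltW R ⟨x.n + d.n + rc R x.g d.g, x.g * d.g⟩
      ⟨y.n + d.n + rc R y.g d.g, y.g * d.g⟩ := by
  rcases h with h | ⟨e, h⟩
  · have b1 := rc_le_one (R := R) x.g d.g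
    have b2 := rc_nonneg (R := R) y.g d.g
    have b3 := rc_nonneg (R := R) x.g d.g
    have b4 := rc_le_one (R := R) y.g d.g
    by_cases hlt : x.n + d.n + rc R x.g d.g < y.n + d.n + rc R y.g d.g
    · exact Or.inl hlt
    · have h1 : rc R x.g d.g = 1 := by omega
      have h2 : rc R y.g d.g = 0 := by omega
      refine Or.inr ⟨?_, ?_⟩
      · show x.n + d.n + rc R x.g d.g = y.n + d.n + rc R y.g d.g
        omega
      · exact tie hR ((rc_eq_one_iff' hR).1 h1) ((rc_eq_zero_iff' hR).1 h2)
  · rcases monoR hR d.g h with ⟨h1, h2⟩ | ⟨h1, h2⟩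
    · refine Or.inl ?_
      show x.n + d.n + rc R x.g d.g < y.n + d.n + rc R y.g d.g
      omega
    · refine Or.inr ⟨?_, h2⟩
      show x.n + d.n + rc R x.g d.g = y.n + d.n + rc R y.g d.g
      omega

end RiegerAux

/-- Rieger's theorem: every cyclically ordered group is the wound-round group
`F/⟨z⟩` of a totally ordered group `F` with `z` positive, central and cofinal. -/
theorem rieger {G : Type u} [Group G] (R : G → G → G → Prop)
    (hR : IsCyclicOrder R) : Nonempty (RiegerWitness G R) := by
  classical
  open RiegerAux in
  letI grp : Group (Wd G) := wdGroup hR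
  letI lin : LinearOrder (Wd G) := wdLinearOrder hR
  -- basic facts about the structure
  have hmul : ∀ x y : Wd G, x * y = ⟨x.n + y.n + rc R x.g y.g, x.g * y.g⟩ :=
    fun _ _ => rfl
  have hone : (1 : Wd G) = ⟨0, 1⟩ := rfl
  set z : Wd G := ⟨1, 1⟩ with hz_def
  have hznat : ∀ m : ℕ, z ^ m = (⟨(m : ℤ), 1⟩ : Wd G) := by
    intro m
    induction m with
    | zero => simpa using hone
    | succ m ih =>
      rw [pow_succ, ih, hmul]
      apply Wd.ext'
      · show (m : ℤ) + 1 + rc R 1 1 = ((m + 1 : ℕ) : ℤ)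
        rw [rc_one_left hR]
        push_cast; omega
      · exact mul_one 1
  have hzpow : ∀ n : ℤ, z ^ n = (⟨n, 1⟩ : Wd G) := by
    intro n
    cases n with
    | ofNat m => rw [Int.ofNat_eq_coe, zpow_natCast, hznat]
    | negSucc m =>
      rw [zpow_negSucc, hznat]
      show (⟨-((m + 1 : ℕ) : ℤ) - rc R 1 1⁻¹, (1 : G)⁻¹⟩ : Wd G) = ⟨Int.negSucc m, 1⟩
      apply Wd.ext'
      · show -((m + 1 : ℕ) : ℤ) - rc R 1 1⁻¹ = Int.negSucc m
        rw [inv_one, rc_one_left hR, Int.negSucc_eq]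
        push_cast; omega
      · exact inv_one
  have hlt : ∀ x y : Wd G, (x < y) = ltW R x y := fun _ _ => rfl
  have hle : ∀ x y : Wd G, (x ≤ y) = leW R x y := fun _ _ => rfl
  -- the homomorphism
  let φ : Wd G →* G := ⟨⟨RiegerAux.Wd.g, rfl⟩, fun _ _ => rfl⟩
  have hφ : ∀ x : Wd G, φ x = x.g := fun _ => rfl
  -- interval facts
  have mem_interval : ∀ x : Wd G, 1 ≤ x → x < z → x.n = 0 := by
    intro x h1 h2
    rw [hle] at h1
    rw [hlt] at h2
    have e2 : x.n < 1 := by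
      rcases h2 with h2 | ⟨e, h2⟩
      · exact h2
      · exact absurd h2 (not_rlt_one hR _)
    rcases h1 with h1 | h1
    · rcases h1 with h1 | ⟨e, _⟩
      · exact absurd h1 (by simp [hone] at *; omega)
      · exact e.symm
    · rw [← h1]; rfl
  have one_le' : ∀ g : G, (1 : Wd G) ≤ (⟨0, g⟩ : Wd G) := by
    intro g
    rw [hle]
    by_cases hg : g = 1
    · exact Or.inr (Wd.ext' rfl hg.symm)
    · exact Or.inl (Or.inr ⟨rfl, (rlt_one_iff hR).2 hg⟩)
  have lt_z' : ∀ g : G, (⟨0, g⟩ : Wd G) < z := by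
    intro g; rw [hlt]; exact Or.inl (show (0:ℤ) < 1 by norm_num)
  refine ⟨⟨Wd G, ?_, z, ?_, ?_, ?_, φ, ?_, ?_, ?_⟩⟩
  · -- mul_lt_mul
    intro a b c d h
    rw [hlt] at h ⊢
    exact mono_right hR d (c * a) (c * b) (mono_left hR c a b h)
  · -- one_lt_z
    rw [hlt]; exact Or.inl (show (0:ℤ) < 1 by norm_num)
  · -- central
    intro f
    rw [hmul, hmul]
    apply Wd.ext'
    · show 1 + f.n + rc R 1 f.g = f.n + 1 + rc R f.g 1
      rw [rc_one_left hR, rc_one_right hR]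
      omega
    · show 1 * f.g = f.g * 1
      rw [one_mul, mul_one]
  · -- cofinal
    intro f
    refine ⟨f.n + 1, ?_⟩
    rw [hzpow, hle]
    refine Or.inl (Or.inl ?_)
    show f.n < f.n + 1
    omega
  · -- surjective
    intro g
    exact ⟨⟨0, g⟩, rfl⟩
  · -- kernel
    intro f
    constructor
    · intro h
      refine ⟨f.n, ?_⟩
      rw [hzpow]
      exact Wd.ext' rfl h
    · rintro ⟨n, rfl⟩
      rw [hzpow n]
      rfl
  · -- winding
    intro a b c
    constructor
    · intro h
      have hd := hne hR h
      refine ⟨⟨0, a⟩, ⟨0, b⟩, ⟨0, c⟩, rfl, rfl, rfl,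
        one_le' a, lt_z' a, one_le' b, lt_z' b, one_le' c, lt_z' c, ?_⟩
      rcases (cyc_iff hR hd.1 hd.2.1 hd.2.2).1 h with ⟨h1, h2⟩ | ⟨h1, h2⟩ | ⟨h1, h2⟩
      · exact Or.inl ⟨Or.inr ⟨rfl, h1⟩, Or.inr ⟨rfl, h2⟩⟩
      · exact Or.inr (Or.inl ⟨Or.inr ⟨rfl, h1⟩, Or.inr ⟨rfl, h2⟩⟩)
      · exact Or.inr (Or.inr ⟨Or.inr ⟨rfl, h1⟩, Or.inr ⟨rfl, h2⟩⟩)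
    · rintro ⟨a', b', c', rfl, rfl, rfl, ha1, ha2, hb1, hb2, hc1, hc2, hord⟩
      have ea : a'.n = 0 := mem_interval a' ha1 ha2
      have eb : b'.n = 0 := mem_interval b' hb1 hb2
      have ec : c'.n = 0 := mem_interval c' hc1 hc2
      have conv : ∀ x y : Wd G, x.n = 0 → y.n = 0 → x < y → rlt R x.g y.g := by
        intro x y ex ey hxy
        rw [hlt] at hxy
        rcases hxy with hxy | ⟨_, hxy⟩
        · omega
        · exact hxy
      show R a'.g b'.g c'.g
      rcases hord with ⟨h1, h2⟩ | ⟨h1, h2⟩ | ⟨h1, h2⟩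
      · exact cyc3 hR (conv _ _ ea eb h1) (conv _ _ eb ec h2)
      · exact RiegerAux.rot hR (RiegerAux.rot hR
          (cyc3 hR (conv _ _ eb ec h1) (conv _ _ ec ea h2)))
      · exact RiegerAux.rot hR
          (cyc3 hR (conv _ _ ec ea h1) (conv _ _ ea eb h2))
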